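/- Let G be a profinite group in which every π-element has centralizer that is either finite or open, and suppose some π-element b has infinite order. Then C_G(b) is open, and every π-element of C_G(b) has open centralizer in G. -/

import Mathlib

/-- An element `x` of a topological (profinite) group is a `π`-element if the
order of its image in every finite continuous quotient (i.e. every quotient by
an open normal subgroup) is a `π`-number. -/
def IsProPiElement {G : Type*} [Group G] [TopologicalSpace G] (π : Set ℕ) (x : G) : Prop :=
  ∀ (N : Subgroup G) [N.Normal], IsOpen (N : Set G) →
    ∀ p : ℕ, p.Prime → p ∣ orderOf (QuotientGroup.mk x : G ⧸ N) → p ∈ π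

/-- if in a profinite group `G` every `π`-element has finite or
open centralizer, and some `π`-element `b` has infinite order, then `C_G(b)`
is open and every `π`-element of `C_G(b)` has open centralizer in `G`. -/
theorem stmt14 (G : Type*) [Group G] [TopologicalSpace G] [IsTopologicalGroup G]
    [CompactSpace G] [T2Space G] [TotallyDisconnectedSpace G]
    (π : Set ℕ)
    (hres : ∀ x : G, IsProPiElement π x →
      Finite (Subgroup.centralizer {x}) ∨ IsOpen ((Subgroup.centralizer {x} : Subgroup G) : Set G))
    (b : G) (hb : IsProPiElement π b) (hbinf : ¬ IsOfFinOrder b) :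
    IsOpen ((Subgroup.centralizer {b} : Subgroup G) : Set G) ∧
      ∀ x : G, IsProPiElement π x → x ∈ Subgroup.centralizer {b} →
        IsOpen ((Subgroup.centralizer {x} : Subgroup G) : Set G) := by
  have key : ∀ x : G, b ∈ Subgroup.centralizer ({x} : Set G) → IsProPiElement π x →
      IsOpen ((Subgroup.centralizer {x} : Subgroup G) : Set G) := by
    intro x hbx hx
    rcases hres x hx with hfin | hopen
    · exfalso
      have hsub : (Subgroup.zpowers b : Set G) ⊆ (Subgroup.centralizer ({x} : Set G) : Set G) := by
        rintro g ⟨n, rfl⟩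
        rw [SetLike.mem_coe, Subgroup.mem_centralizer_singleton_iff]
        have h1 : Commute b x := (Subgroup.mem_centralizer_singleton_iff.1 hbx)
        exact (h1.zpow_left n).eq
      have := (infinite_zpowers.2 hbinf).mono hsub
      rw [Set.infinite_coe_iff.symm] at this
      exact this.not_finite hfin
    · exact hopen
  have h0 : IsOpen ((Subgroup.centralizer {b} : Subgroup G) : Set G) :=
    key b (Subgroup.mem_centralizer_singleton_iff.2 rfl) hb
  refine ⟨h0, fun x hx hxb => key x ?_ hx⟩
  rw [Subgroup.mem_centralizer_singleton_iff] at hxb ⊢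
  exact hxb.symm
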